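/- Fix $\theta > 0$ and $\Omega_n, \Omega_f > 0$. The quadratic equation $a_n^2(1+\theta)\{(1+\theta)\Omega_f - \Omega_n\} - 2a_n\Omega_f(1+\theta) + \Omega_f = 0$ has exactly one root in the interval $(0, 1/(1+\theta))$ when $(1+\theta)\Omega_f \neq \Omega_n$, given by $a_n^* = \frac{\Omega_f}{(1+\theta)\Omega_f - \Omega_n} - \frac{\sqrt{\Omega_n\Omega_f(1+\theta)}}{(1+\theta)\{(1+\theta)\Omega_f - \Omega_n\}}$. -/

import Mathlib

open Real

/-- The quadratic `a²(1+θ)((1+θ)Ωf - Ωn) - 2aΩf(1+θ) + Ωf = 0` has exactly one root in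
`(0, 1/(1+θ))` when `(1+θ)Ωf ≠ Ωn`, namely
`a* = Ωf/((1+θ)Ωf - Ωn) - √(ΩnΩf(1+θ))/((1+θ)((1+θ)Ωf - Ωn))`. -/
theorem quadratic_root_IntSCSI (θ Ωn Ωf : ℝ) (hθ : 0 < θ) (hΩn : 0 < Ωn) (hΩf : 0 < Ωf)
    (hne : (1 + θ) * Ωf ≠ Ωn) :
    let astar : ℝ := Ωf / ((1 + θ) * Ωf - Ωn)
      - Real.sqrt (Ωn * Ωf * (1 + θ)) / ((1 + θ) * ((1 + θ) * Ωf - Ωn));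
    astar ∈ Set.Ioo (0 : ℝ) (1 / (1 + θ)) ∧
      ∀ a ∈ Set.Ioo (0 : ℝ) (1 / (1 + θ)),
        (a ^ 2 * (1 + θ) * ((1 + θ) * Ωf - Ωn) - 2 * a * Ωf * (1 + θ) + Ωf = 0
          ↔ a = astar) := by
  have ht : (0:ℝ) < 1 + θ := by linarith
  have hD : (1 + θ) * Ωf - Ωn ≠ 0 := sub_ne_zero.mpr hne
  have hsnn : (0:ℝ) ≤ Ωn * Ωf * (1 + θ) := by positivity
  have hs2 : Real.sqrt (Ωn * Ωf * (1 + θ)) ^ 2 = Ωn * Ωf * (1 + θ) := Real.sq_sqrt hsnn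
  have hspos : 0 < Real.sqrt (Ωn * Ωf * (1 + θ)) := Real.sqrt_pos.mpr (by positivity)
  set s := Real.sqrt (Ωn * Ωf * (1 + θ)) with hsdef
  intro astar
  have htD : (1 + θ) * ((1 + θ) * Ωf - Ωn) ≠ 0 := mul_ne_zero (ne_of_gt ht) hD
  have key : astar * ((1 + θ) * ((1 + θ) * Ωf - Ωn)) = Ωf * (1 + θ) - s := by
    simp only [astar]
    field_simp
    exact mul_div_cancel_left₀ _ (by rwa [mul_comm Ωf])
  have hDcases : (1 + θ) * Ωf - Ωn < 0 ∨ 0 < (1 + θ) * Ωf - Ωn := hD.lt_or_gt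
  -- astar ∈ Ioo
  have hmem : astar ∈ Set.Ioo (0 : ℝ) (1 / (1 + θ)) := by
    constructor
    · rcases hDcases with hlt | hlt
      · -- D < 0 : s > Ωf t, so astar = (Ωf t - s)/(t D) > 0
        have hsgt : Ωf * (1 + θ) < s := by nlinarith [hs2, hspos]
        nlinarith [key, mul_pos ht (neg_pos.mpr hlt)]
      · have hslt : s < Ωf * (1 + θ) := by nlinarith [hs2, hspos]
        nlinarith [key, mul_pos ht hlt]
    · rw [lt_div_iff₀ ht]
      rcases hDcases with hlt | hlt
      · -- need astar * (1+θ) < 1; s < Ωn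
        have hslt : s < Ωn := by nlinarith [hs2, hspos]
        nlinarith [key]
      · have hsgt : Ωn < s := by nlinarith [hs2, hspos]
        nlinarith [key]
  refine ⟨hmem, fun a ha => ?_⟩
  obtain ⟨ha0, ha1⟩ := ha
  rw [lt_div_iff₀ ht] at ha1
  constructor
  · intro hQ
    -- factorization: multiply Q by tD
    have hfac : (a * ((1 + θ) * ((1 + θ) * Ωf - Ωn)) - (Ωf * (1 + θ) - s))
        * (a * ((1 + θ) * ((1 + θ) * Ωf - Ωn)) - (Ωf * (1 + θ) + s)) = 0 := by
      linear_combination ((1 + θ) * ((1 + θ) * Ωf - Ωn)) * hQ - hs2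
    rcases mul_eq_zero.mp hfac with h1 | h2
    · have : a * ((1 + θ) * ((1 + θ) * Ωf - Ωn)) = astar * ((1 + θ) * ((1 + θ) * Ωf - Ωn)) := by
        rw [key]; linarith
      exact mul_right_cancel₀ htD this
    · exfalso
      have h2' : a * ((1 + θ) * ((1 + θ) * Ωf - Ωn)) = Ωf * (1 + θ) + s := by linarith
      rcases hDcases with hlt | hlt
      · nlinarith [mul_pos ha0 (mul_pos ht (neg_pos.mpr hlt))]
      · nlinarith [mul_lt_of_lt_one_left hlt (show a * (1+θ) < 1 from ha1)]
  · rintro rfl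
    have h : (astar ^ 2 * (1 + θ) * ((1 + θ) * Ωf - Ωn) - 2 * astar * Ωf * (1 + θ) + Ωf)
        * ((1 + θ) * ((1 + θ) * Ωf - Ωn)) = 0 := by
      linear_combination (astar * ((1 + θ) * ((1 + θ) * Ωf - Ωn)) + Ωf * (1 + θ) - s
        - 2 * Ωf * (1 + θ)) * key + hs2
    exact (mul_eq_zero.mp h).resolve_right htD
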